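/- For a (t+1)-regular connected simple graph G with t ≥ 1 and u ≠ 1, −t, both q = (1−u)^{-1} and q = (t+u)^{-1} are poles of the Bartholdi zeta function ζ_G(q,u), and these attain the boundaries of the critical strip: the set of pole magnitudes lies between min(|t+u|^{-1},|1−u|^{-1}) and max(|t+u|^{-1},|1−u|^{-1}). -/

import Mathlib

open Matrix

private lemma abs_le_abs_of_sq_le_sq'' {a b : ℝ} (h : a ^ 2 ≤ b ^ 2) : |a| ≤ |b| := by
  nlinarith [abs_nonneg a, abs_nonneg b, sq_abs a, sq_abs b]

private lemma real_quad_bound {b c lam r : ℝ} (hl : lam ^ 2 ≤ (b + c) ^ 2)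
    (hr : r ^ 2 - lam * r + b * c = 0) :
    min |b| |c| ≤ |r| ∧ |r| ≤ max |b| |c| := by
  have key : (r ^ 2 - b ^ 2) * (r ^ 2 - c ^ 2) = (lam ^ 2 - (b + c) ^ 2) * r ^ 2 := by
    linear_combination (r ^ 2 + lam * r + b * c) * hr
  have key' : (r ^ 2 - b ^ 2) * (r ^ 2 - c ^ 2) ≤ 0 := by
    rw [key]
    exact mul_nonpos_of_nonpos_of_nonneg (by linarith) (sq_nonneg r)
  have h1 : min (b ^ 2) (c ^ 2) ≤ r ^ 2 ∧ r ^ 2 ≤ max (b ^ 2) (c ^ 2) := by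
    rcases mul_nonpos_iff.mp key' with ⟨h, h'⟩ | ⟨h, h'⟩
    · exact ⟨(min_le_left _ _).trans (by linarith), le_max_of_le_right (by linarith)⟩
    · exact ⟨(min_le_right _ _).trans (by linarith), le_max_of_le_left (by linarith)⟩
  constructor
  · rcases le_total |b| |c| with hbc | hbc
    · have hb2 : b ^ 2 ≤ c ^ 2 := by nlinarith [sq_abs b, sq_abs c, abs_nonneg b]
      rw [min_eq_left hbc]
      have : b ^ 2 ≤ r ^ 2 := le_trans (by rw [min_eq_left hb2]) h1.1
      simpa [abs_abs] using abs_le_abs_of_sq_le_sq'' this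
    · have hb2 : c ^ 2 ≤ b ^ 2 := by nlinarith [sq_abs b, sq_abs c, abs_nonneg c]
      rw [min_eq_right hbc]
      have : c ^ 2 ≤ r ^ 2 := le_trans (by rw [min_eq_right hb2]) h1.1
      simpa [abs_abs] using abs_le_abs_of_sq_le_sq'' this
  · rcases le_total |b| |c| with hbc | hbc
    · have hb2 : b ^ 2 ≤ c ^ 2 := by nlinarith [sq_abs b, sq_abs c, abs_nonneg b]
      rw [max_eq_right hbc]
      have : r ^ 2 ≤ c ^ 2 := h1.2.trans (by rw [max_eq_right hb2])
      simpa [abs_abs] using abs_le_abs_of_sq_le_sq'' this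
    · have hb2 : c ^ 2 ≤ b ^ 2 := by nlinarith [sq_abs b, sq_abs c, abs_nonneg c]
      rw [max_eq_left hbc]
      have : r ^ 2 ≤ b ^ 2 := h1.2.trans (by rw [max_eq_left hb2])
      simpa [abs_abs] using abs_le_abs_of_sq_le_sq'' this

private lemma complex_quad_bound {b c lam : ℝ} (hl : lam ^ 2 ≤ (b + c) ^ 2)
    {x : ℂ} (hx : x ^ 2 - (lam : ℂ) * x + (b : ℂ) * (c : ℂ) = 0) :
    min |b| |c| ≤ ‖x‖ ∧ ‖x‖ ≤ max |b| |c| := by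
  by_cases him : x.im = 0
  · have hxe : x = (x.re : ℂ) := by
      apply Complex.ext <;> simp [him]
    rw [hxe] at hx
    have hr : x.re ^ 2 - lam * x.re + b * c = 0 := by exact_mod_cast hx
    have := real_quad_bound hl hr
    rwa [hxe, Complex.norm_real, Real.norm_eq_abs]
  · have hre := congrArg Complex.re hx
    have him2 := congrArg Complex.im hx
    simp [pow_two, Complex.mul_re, Complex.mul_im, Complex.add_re, Complex.add_im,
      Complex.sub_re, Complex.sub_im, Complex.ofReal_re, Complex.ofReal_im] at hre him2
    have h0 : x.im * (2 * x.re - lam) = 0 := by linear_combination him2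
    have hlam : lam = 2 * x.re := by
      rcases mul_eq_zero.mp h0 with h | h
      · exact absurd h him
      · linarith
    have habs : (‖x‖) ^ 2 = b * c := by
      rw [Complex.sq_norm, Complex.normSq_apply]
      linear_combination -hre - x.re * hlam
    have habsbc : |b| * |c| = b * c := by
      rw [← abs_mul, abs_of_nonneg]
      rw [← habs]; positivity
    constructor
    · have h2 : (min |b| |c|) ^ 2 ≤ (‖x‖) ^ 2 := by
        rw [habs, ← habsbc]
        rcases le_total |b| |c| with h | h
        · rw [min_eq_left h]; nlinarith [abs_nonneg b]
        · rw [min_eq_right h]; nlinarith [abs_nonneg c]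
      have := abs_le_abs_of_sq_le_sq'' h2
      rwa [abs_of_nonneg (le_min (abs_nonneg b) (abs_nonneg c)),
        abs_of_nonneg (norm_nonneg x)] at this
    · have h2 : (‖x‖) ^ 2 ≤ (max |b| |c|) ^ 2 := by
        rw [habs, ← habsbc]
        rcases le_total |b| |c| with h | h
        · rw [max_eq_right h]; nlinarith [abs_nonneg b, abs_nonneg c]
        · rw [max_eq_left h]; nlinarith [abs_nonneg b, abs_nonneg c]
      have := abs_le_abs_of_sq_le_sq'' h2
      rwa [abs_of_nonneg (norm_nonneg x),
        abs_of_nonneg (le_max_of_le_left (abs_nonneg b))] at this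

theorem regular_graph_critical_strip_saturated
    {V : Type*} [Fintype V] [DecidableEq V]
    (G : SimpleGraph V) [DecidableRel G.Adj]
    (hconn : G.Connected)
    (t : ℕ) (ht : 1 ≤ t) (hreg : G.IsRegularOfDegree (t + 1))
    (u : ℝ) (hu1 : u ≠ 1) (hu2 : u ≠ -(t : ℝ))
    (f : ℂ → ℂ)
    (hf : ∀ q : ℂ, f q =
      (1 - ((1 - u : ℝ) : ℂ) ^ 2 * q ^ 2) ^ (G.edgeFinset.card - Fintype.card V) *
        ((1 + ((1 - u : ℝ) : ℂ) * (((t : ℝ) + u : ℝ) : ℂ) * q ^ 2) • (1 : Matrix V V ℂ) -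
          q • G.adjMatrix ℂ).det) :
    f (((1 - u : ℝ) : ℂ))⁻¹ = 0 ∧
    f ((((t : ℝ) + u : ℝ) : ℂ))⁻¹ = 0 ∧
    ∀ q : ℂ, f q = 0 →
      min |(t : ℝ) + u|⁻¹ |1 - u|⁻¹ ≤ ‖q‖ ∧
      ‖q‖ ≤ max |(t : ℝ) + u|⁻¹ |1 - u|⁻¹ := by
  haveI : Nonempty V := hconn.nonempty
  set b : ℝ := 1 - u with hbdef
  set c : ℝ := (t : ℝ) + u with hcdef
  have hb : b ≠ 0 := sub_ne_zero.mpr (Ne.symm hu1)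
  have hc : c ≠ 0 := by
    intro h; apply hu2; rw [hcdef] at h; linarith
  have hbC : (b : ℂ) ≠ 0 := Complex.ofReal_ne_zero.mpr hb
  have hcC : (c : ℂ) ≠ 0 := Complex.ofReal_ne_zero.mpr hc
  have hsum : (b : ℂ) + (c : ℂ) = (t : ℂ) + 1 := by
    rw [hbdef, hcdef]; push_cast; ring
  -- the determinant vanishes whenever 1 + b c q² = (t+1) q
  have hdet : ∀ q : ℂ, 1 + (b : ℂ) * (c : ℂ) * q ^ 2 = ((t : ℂ) + 1) * q →
      ((1 + (b : ℂ) * (c : ℂ) * q ^ 2) • (1 : Matrix V V ℂ) - q • G.adjMatrix ℂ).det = 0 := by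
    intro q hq
    rw [← Matrix.exists_mulVec_eq_zero_iff]
    refine ⟨Function.const V 1, ?_, ?_⟩
    · intro h
      have := congrFun h (Classical.arbitrary V)
      simpa using this
    · ext i
      simp only [Matrix.sub_mulVec, Matrix.smul_mulVec, Matrix.one_mulVec,
        Pi.sub_apply, Pi.smul_apply, smul_eq_mul, Pi.zero_apply,
        SimpleGraph.adjMatrix_mulVec_const_apply_of_regular hreg, Function.const_apply]
      push_cast
      linear_combination hq
  refine ⟨?_, ?_, ?_⟩
  · rw [hf]
    have : ((1 + (b : ℂ) * (c : ℂ) * ((b : ℂ)⁻¹) ^ 2) • (1 : Matrix V V ℂ) -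
        ((b : ℂ)⁻¹) • G.adjMatrix ℂ).det = 0 := by
      apply hdet
      linear_combination ((c : ℂ) * (b : ℂ)⁻¹ - 1) * mul_inv_cancel₀ hbC + (b : ℂ)⁻¹ * hsum
    rw [this, mul_zero]
  · rw [hf]
    have : ((1 + (b : ℂ) * (c : ℂ) * ((c : ℂ)⁻¹) ^ 2) • (1 : Matrix V V ℂ) -
        ((c : ℂ)⁻¹) • G.adjMatrix ℂ).det = 0 := by
      apply hdet
      linear_combination ((b : ℂ) * (c : ℂ)⁻¹ - 1) * mul_inv_cancel₀ hcC + (c : ℂ)⁻¹ * hsum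
    rw [this, mul_zero]
  · intro q hq0
    rw [hf] at hq0
    rcases mul_eq_zero.mp hq0 with hpow | hdet0
    · -- 1 - b² q² = 0, so |q| = |b|⁻¹
      have hbase : 1 - (b : ℂ) ^ 2 * q ^ 2 = 0 := (pow_eq_zero_iff'.mp hpow).1
      have hsq : ((b : ℂ) * q) ^ 2 = 1 := by linear_combination -hbase
      have habs : (‖(b : ℂ) * q‖) ^ 2 = 1 := by
        rw [← norm_pow, hsq, norm_one]
      have habs1 : ‖(b : ℂ) * q‖ = 1 := by
        nlinarith [norm_nonneg ((b : ℂ) * q)]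
      have hq : ‖q‖ = |b|⁻¹ := by
        rw [norm_mul, Complex.norm_real, Real.norm_eq_abs] at habs1
        rw [inv_eq_one_div, eq_div_iff (abs_ne_zero.mpr hb), mul_comm]
        exact habs1
      rw [hq]
      exact ⟨min_le_right _ _, le_max_right _ _⟩
    · -- determinant case
      obtain ⟨v, hvne, hv⟩ := Matrix.exists_mulVec_eq_zero_iff.mpr hdet0
      have hqne : q ≠ 0 := by
        rintro rfl
        simp at hdet0
      set κ : ℂ := 1 + (b : ℂ) * (c : ℂ) * q ^ 2 with hκdef
      have hvi : ∀ i, κ * v i = q * ∑ j ∈ G.neighborFinset i, v j := by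
        intro i
        have := congrFun hv i
        simp only [Matrix.sub_mulVec, Matrix.smul_mulVec, Matrix.one_mulVec,
          Pi.sub_apply, Pi.smul_apply, smul_eq_mul, Pi.zero_apply,
          SimpleGraph.adjMatrix_mulVec_apply] at this
        exact sub_eq_zero.mp this
      -- the sum S and weight W
      set S : ℂ := ∑ i, (starRingEnd ℂ) (v i) * ∑ j ∈ G.neighborFinset i, v j with hSdef
      set Wr : ℝ := ∑ i, Complex.normSq (v i) with hWdef
      have hWpos : 0 < Wr := by
        obtain ⟨i, hi⟩ := Function.ne_iff.mp hvne
        apply Finset.sum_pos' (fun j _ => Complex.normSq_nonneg _)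
        exact ⟨i, Finset.mem_univ i, by simpa [Complex.normSq_pos] using hi⟩
      have hκW : κ * (Wr : ℂ) = q * S := by
        rw [hSdef, hWdef]
        push_cast
        rw [Finset.mul_sum, Finset.mul_sum]
        refine Finset.sum_congr rfl fun i _ => ?_
        rw [Complex.normSq_eq_conj_mul_self]
        calc κ * ((starRingEnd ℂ) (v i) * v i)
            = (starRingEnd ℂ) (v i) * (κ * v i) := by ring
          _ = (starRingEnd ℂ) (v i) * (q * ∑ j ∈ G.neighborFinset i, v j) := by rw [hvi i]
          _ = q * ((starRingEnd ℂ) (v i) * ∑ j ∈ G.neighborFinset i, v j) := by ring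
      have hSexp : S = ∑ i, ∑ j, (if G.Adj i j then (starRingEnd ℂ) (v i) * v j else 0) := by
        rw [hSdef]
        refine Finset.sum_congr rfl fun i _ => ?_
        rw [Finset.mul_sum]
        rw [SimpleGraph.neighborFinset_eq_filter, Finset.sum_filter]
      have hconjS : (starRingEnd ℂ) S = S := by
        rw [hSexp]
        simp only [map_sum, apply_ite (starRingEnd ℂ), _root_.map_mul, map_zero,
          Complex.conj_conj]
        rw [Finset.sum_comm]
        refine Finset.sum_congr rfl fun i _ => Finset.sum_congr rfl fun j _ => ?_
        exact if_congr (G.adj_comm j i) (mul_comm _ _) rfl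
      -- μ = κ / q is real
      have hWC : (Wr : ℂ) ≠ 0 := Complex.ofReal_ne_zero.mpr (ne_of_gt hWpos)
      have hμ : κ / q = S / (Wr : ℂ) := by
        rw [div_eq_div_iff hqne hWC]
        linear_combination hκW
      have hμreal : (starRingEnd ℂ) (κ / q) = κ / q := by
        rw [hμ, map_div₀, hconjS, Complex.conj_ofReal]
      set lam : ℝ := (κ / q).re with hlamdef
      have hlamC : (lam : ℂ) = κ / q := Complex.conj_eq_iff_re.mp hμreal
      have hκlam : κ = (lam : ℂ) * q := by
        rw [hlamC]; field_simp
      -- bound |lam| ≤ t + 1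
      obtain ⟨i₀, -, hmax⟩ := Finset.exists_max_image Finset.univ
        (fun i => ‖v i‖) Finset.univ_nonempty
      have hvi₀pos : 0 < ‖v i₀‖ := by
        obtain ⟨j, hj⟩ := Function.ne_iff.mp hvne
        exact lt_of_lt_of_le (by simpa using hj : 0 < ‖v j‖)
          (hmax j (Finset.mem_univ j))
      have heig : (lam : ℂ) * v i₀ = ∑ j ∈ G.neighborFinset i₀, v j := by
        have h1 := hvi i₀
        rw [hκlam] at h1
        have : q * ((lam : ℂ) * v i₀) = q * ∑ j ∈ G.neighborFinset i₀, v j := by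
          linear_combination h1
        exact mul_left_cancel₀ hqne this
      have hlambound : |lam| * ‖v i₀‖ ≤ ((t : ℝ) + 1) * ‖v i₀‖ := by
        have h1 : ‖(lam : ℂ) * v i₀‖ ≤
            ∑ j ∈ G.neighborFinset i₀, ‖v j‖ := by
          rw [heig]
          exact norm_sum_le _ _
        have h2 : ∑ j ∈ G.neighborFinset i₀, ‖v j‖ ≤
            ∑ j ∈ G.neighborFinset i₀, ‖v i₀‖ :=
          Finset.sum_le_sum fun j _ => hmax j (Finset.mem_univ j)
        have h3 : ∑ j ∈ G.neighborFinset i₀, ‖v i₀‖ =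
            ((t : ℝ) + 1) * ‖v i₀‖ := by
          rw [Finset.sum_const, SimpleGraph.card_neighborFinset_eq_degree, hreg i₀]
          push_cast
          ring
        rw [norm_mul, Complex.norm_real, Real.norm_eq_abs] at h1
        calc |lam| * ‖v i₀‖ ≤ ∑ j ∈ G.neighborFinset i₀, ‖v j‖ := h1
          _ ≤ _ := h2.trans (le_of_eq h3)
      have hlamle : |lam| ≤ (t : ℝ) + 1 := by
        nlinarith [hlambound, hvi₀pos]
      have hl : lam ^ 2 ≤ (b + c) ^ 2 := by
        have hbc : b + c = (t : ℝ) + 1 := by rw [hbdef, hcdef]; ring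
        rw [hbc]
        nlinarith [sq_abs lam, abs_nonneg lam]
      -- x = q⁻¹ satisfies x² - lam x + b c = 0
      set x : ℂ := q⁻¹ with hxdef
      have hx : x ^ 2 - (lam : ℂ) * x + (b : ℂ) * (c : ℂ) = 0 := by
        rw [hxdef]
        linear_combination (q⁻¹) ^ 2 * hκlam - (q⁻¹) ^ 2 * hκdef -
          ((b : ℂ) * (c : ℂ) * (q * q⁻¹ + 1) - (lam : ℂ) * q⁻¹) * mul_inv_cancel₀ hqne
      obtain ⟨hlo, hhi⟩ := complex_quad_bound hl hx
      have hxabs : ‖x‖ = (‖q‖)⁻¹ := by rw [hxdef, norm_inv]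
      have hqabspos : 0 < ‖q‖ := by
        simpa [norm_pos_iff] using hqne
      have hxpos : 0 < ‖x‖ := by rw [hxabs]; positivity
      have hqeq : ‖q‖ = (‖x‖)⁻¹ := by
        rw [hxabs, inv_inv]
      have hbpos : 0 < |b| := abs_pos.mpr hb
      have hcpos : 0 < |c| := abs_pos.mpr hc
      constructor
      · have h1 : ‖x‖ ≤ max |c| |b| := by rw [max_comm]; exact hhi
        have h2 := inv_anti₀ hxpos h1
        rw [hqeq]
        refine le_trans ?_ h2
        rcases le_total |c| |b| with h | h
        · rw [max_eq_right h]; exact min_le_right _ _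
        · rw [max_eq_left h]; exact min_le_left _ _
      · have h1 : min |c| |b| ≤ ‖x‖ := by rw [min_comm]; exact hlo
        have hminpos : 0 < min |c| |b| := lt_min hcpos hbpos
        have h2 := inv_anti₀ hminpos h1
        rw [hqeq]
        refine h2.trans ?_
        rcases le_total |c| |b| with h | h
        · rw [min_eq_left h]; exact le_max_left _ _
        · rw [min_eq_right h]; exact le_max_right _ _
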